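/- Theorem 1 (the Greedy-RP mechanism is truthful for single-minded bidders): fix the bids of all bidders other than j, and let bidder j have true type consisting of a nonzero bundle d* and a true valuation v* ≥ 0. For a report (d', v') by bidder j, her utility is (v* if d* ≤ d' pointwise, else 0) minus the payment p_j determined by GRP-P if j is granted by GRP-A, and 0 if j is not granted. Then the utility of the truthful report (d*, v*) is greater than or equal to the utility of every report (d', v') with d' a nonzero bundle and v' ≥ 0; in particular, truth-telling is a weakly dominant strategy. -/

import Mathlib

open Classical Finset

noncomputable section

/-- A bundle: requested amounts of each of the `k` VM types. -/
abbrev Bundle (k : ℕ) := Fin k → ℕ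

/-- A bid: a bundle together with a declared valuation. -/
abbrev Bid (k : ℕ) := Bundle k × ℝ

/-- A bundle is nonzero if some coordinate is positive. -/
def nonzeroBundle {k : ℕ} (d : Bundle k) : Prop := ∃ i, 0 < d i

/-- A valid bid requests a nonzero bundle and declares a nonnegative valuation. -/
def validBid {k : ℕ} (b : Bid k) : Prop := nonzeroBundle b.1 ∧ 0 ≤ b.2

/-- The weighted bundle size `d̂(d) = Σ_i (d i)·(f i)`. -/
def dhat {k : ℕ} (f : Fin k → ℝ) (d : Bundle k) : ℝ := ∑ i, (d i : ℝ) * f i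

/-- The bundle reserve price `ô(d) = Σ_i (d i)·(o i)`. -/
def ohat {k : ℕ} (o : Fin k → ℝ) (d : Bundle k) : ℝ := ∑ i, (d i : ℝ) * o i

/-- The bid density `e(d, v) = v / (d̂ d)^q`. -/
def density {k : ℕ} (f : Fin k → ℝ) (q : ℝ) (b : Bid k) : ℝ := b.2 / (dhat f b.1) ^ q

/-- The indices of the active set `A`, sorted in non-increasing order of bid density;
`mergeSort` is stable and `A.sort (· ≤ ·)` lists indices increasingly, so ties are
broken by smaller index first. -/
def sortedBids {k n : ℕ} (f : Fin k → ℝ) (q : ℝ) (B : Fin n → Bid k) (A : Finset (Fin n)) :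
    List (Fin n) :=
  (A.sort (· ≤ ·)).mergeSort (fun i j => decide (density f q (B j) ≤ density f q (B i)))

/-- Greedy-RP allocation scheme (GRP-A) run on the active index set `A`: process the
indices in non-increasing density order and grant an index whenever both the available
resource constraint (ARC) and the reserve price constraint (RPC) hold. -/
def grants {k n : ℕ} (o f : Fin k → ℝ) (s : Fin k → ℕ) (q : ℝ) (B : Fin n → Bid k)
    (A : Finset (Fin n)) : Finset (Fin n) :=
  (sortedBids f q B A).foldl
    (fun W j =>
      if (∀ i, (B j).1 i + ∑ j' ∈ W, (B j').1 i ≤ s i) ∧ ohat o (B j).1 ≤ (B j).2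
      then insert j W else W) ∅

/-- `W(B)`: the winners of GRP-A run on all bids. -/
def winners {k n : ℕ} (o f : Fin k → ℝ) (s : Fin k → ℕ) (q : ℝ) (B : Fin n → Bid k) :
    Finset (Fin n) :=
  grants o f s q B Finset.univ

/-- `W'_j = W(B_{-j}) \ W(B)`: the new winners once bid `j` is removed. -/
def competitorSet {k n : ℕ} (o f : Fin k → ℝ) (s : Fin k → ℕ) (q : ℝ) (B : Fin n → Bid k)
    (j : Fin n) : Finset (Fin n) :=
  grants o f s q B (Finset.univ.erase j) \ winners o f s q B

/-- The competitor density `e_j^comp`: the maximum density over `W'_j`, or `0` if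
`W'_j` is empty. -/
def ecomp {k n : ℕ} (o f : Fin k → ℝ) (s : Fin k → ℕ) (q : ℝ) (B : Fin n → Bid k)
    (j : Fin n) : ℝ :=
  if h : (competitorSet o f s q B j).Nonempty
  then (competitorSet o f s q B j).sup' h (fun i => density f q (B i))
  else 0

/-- The bid-specific reserve density `e_res(b) = ô(d)/(d̂ d)^q`. -/
def eres {k : ℕ} (o f : Fin k → ℝ) (q : ℝ) (b : Bid k) : ℝ := ohat o b.1 / (dhat f b.1) ^ q

/-- Greedy-RP pricing scheme (GRP-P): a winner `j` pays
`p_j = max(e_j^comp, e_res(b_j)) · (d̂ d_j)^q`; a non-winner pays `0`. -/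
def payment {k n : ℕ} (o f : Fin k → ℝ) (s : Fin k → ℕ) (q : ℝ) (B : Fin n → Bid k)
    (j : Fin n) : ℝ :=
  if j ∈ winners o f s q B
  then max (ecomp o f s q B j) (eres o f q (B j)) * (dhat f (B j).1) ^ q
  else 0

/-- The utility of a single-minded bidder `j` with true type `(dstar, vstar)` when the
submitted family of bids is `B` (so `(B j).1` is her reported bundle): if `j` is
granted by GRP-A she receives her reported bundle, valued at `vstar` if it contains
her true bundle and at `0` otherwise, and pays the GRP-P payment; otherwise her
utility is `0`. -/
def utility {k n : ℕ} (o f : Fin k → ℝ) (s : Fin k → ℕ) (q : ℝ) (B : Fin n → Bid k)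
    (j : Fin n) (dstar : Bundle k) (vstar : ℝ) : ℝ :=
  if j ∈ winners o f s q B then
    (if dstar ≤ (B j).1 then vstar else 0) - payment o f s q B j
  else 0

-- ===== auxiliary development =====
variable {k n : ℕ}

section FoldPart
def gstep (o : Fin k → ℝ) (s : Fin k → ℕ) (C : Fin n → Bid k)
    (W : Finset (Fin n)) (j : Fin n) : Finset (Fin n) :=
  if (∀ i, (C j).1 i + ∑ j' ∈ W, (C j').1 i ≤ s i) ∧ ohat o (C j).1 ≤ (C j).2
  then insert j W else W

variable (o : Fin k → ℝ) (s : Fin k → ℕ) (C : Fin n → Bid k)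

lemma gstep_subset (W : Finset (Fin n)) (i : Fin n) : W ⊆ gstep o s C W i := by
  unfold gstep; split <;> simp [Finset.subset_insert]

lemma subset_foldl (l : List (Fin n)) (W : Finset (Fin n)) :
    W ⊆ l.foldl (gstep o s C) W := by
  induction l generalizing W with
  | nil => simp
  | cons i t ih => exact (gstep_subset o s C W i).trans (ih _)

lemma foldl_subset (l : List (Fin n)) (W : Finset (Fin n)) :
    l.foldl (gstep o s C) W ⊆ W ∪ l.toFinset := by
  induction l generalizing W with
  | nil => simp
  | cons i t ih =>
    refine (ih _).trans ?_
    intro x hx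
    rcases Finset.mem_union.1 hx with hx | hx
    · have : x ∈ insert i W := by
        unfold gstep at hx; revert hx; split <;> intro hx <;> simp_all
      rcases Finset.mem_insert.1 this with rfl | hx <;> simp [hx]
    · simp [hx]

lemma not_mem_foldl (l : List (Fin n)) (W : Finset (Fin n)) (x : Fin n)
    (hW : x ∉ W) (hl : x ∉ l) : x ∉ l.foldl (gstep o s C) W := by
  intro hx
  have := foldl_subset o s C l W hx
  rcases Finset.mem_union.1 this with h | h
  · exact hW h
  · exact hl (List.mem_toFinset.1 h)

lemma foldl_feasible (l : List (Fin n)) (W : Finset (Fin n))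
    (h : ∀ c, ∑ x ∈ W, (C x).1 c ≤ s c) :
    ∀ c, ∑ x ∈ l.foldl (gstep o s C) W, (C x).1 c ≤ s c := by
  induction l generalizing W with
  | nil => simpa using h
  | cons i t ih =>
    refine ih _ ?_
    intro c
    unfold gstep; split
    · rename_i hc
      by_cases hi : i ∈ W
      · simpa [Finset.insert_eq_self.2 hi] using h c
      · rw [Finset.sum_insert hi]; exact hc.1 c
    · exact h c

lemma foldl_congr (C' : Fin n → Bid k) (j : Fin n) (h : ∀ x, x ≠ j → C x = C' x)
    (l : List (Fin n)) (W : Finset (Fin n)) (hW : j ∉ W) (hl : j ∉ l) :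
    l.foldl (gstep o s C) W = l.foldl (gstep o s C') W := by
  induction l generalizing W with
  | nil => rfl
  | cons i t ih =>
    have hij : i ≠ j := by rintro rfl; exact hl (List.mem_cons_self)
    have hWmem : ∀ x ∈ W, C x = C' x := fun x hx => h x (by rintro rfl; exact hW hx)
    have hstep : gstep o s C W i = gstep o s C' W i := by
      unfold gstep
      have hsum : ∀ c, (∑ j' ∈ W, (C j').1 c) = ∑ j' ∈ W, (C' j').1 c :=
        fun c => Finset.sum_congr rfl (fun x hx => by rw [hWmem x hx])
      rw [h i hij]
      simp only [hsum]
    rw [List.foldl_cons, List.foldl_cons, hstep]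
    refine ih _ ?_ ?_
    · intro hj
      have h2 : gstep o s C' W i ⊆ insert i W := by
        unfold gstep; split <;> simp [Finset.subset_insert]
      rcases Finset.mem_insert.1 (h2 hj) with rfl | hj
      · exact hij rfl
      · exact hW hj
    · exact fun hj => hl (List.mem_cons_of_mem _ hj)

lemma gstep_imp (W : Finset (Fin n)) (j i : Fin n) (hjW : j ∉ W)
    (h : (∀ c, (C i).1 c + ∑ j' ∈ insert j W, (C j').1 c ≤ s c) ∧ ohat o (C i).1 ≤ (C i).2) :
    (∀ c, (C i).1 c + ∑ j' ∈ W, (C j').1 c ≤ s c) ∧ ohat o (C i).1 ≤ (C i).2 := by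
  exact ⟨fun c => le_trans
    (Nat.add_le_add_left (Finset.sum_le_sum_of_subset (Finset.subset_insert _ _)) _) (h.1 c), h.2⟩

lemma par (j : Fin n) :
    ∀ (L : List (Fin n)) (X : Finset (Fin n)), L.Nodup → j ∉ L → (∀ x ∈ L, x ∉ X) → j ∉ X →
    (L.foldl (gstep o s C) X \ L.foldl (gstep o s C) (insert j X) = ∅) ∨
    ∃ (G : Finset (Fin n)) (i₁ : Fin n) (l₁ l₂ : List (Fin n)),
      L = l₁ ++ i₁ :: l₂ ∧
      i₁ ∈ L.foldl (gstep o s C) X ∧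
      i₁ ∉ L.foldl (gstep o s C) (insert j X) ∧
      G ⊆ L.foldl (gstep o s C) X ∧
      (∀ x ∈ G, x ∈ X ∨ x ∈ l₁) ∧
      (∃ c, s c < (C i₁).1 c + ((C j).1 c + ∑ x ∈ G, (C x).1 c)) ∧
      (∀ x ∈ L.foldl (gstep o s C) X \ L.foldl (gstep o s C) (insert j X), x = i₁ ∨ x ∈ l₂) := by
  intro L
  induction L with
  | nil =>
    intro X _ _ _ _
    left
    simp only [List.foldl_nil]
    rw [Finset.sdiff_eq_empty_iff_subset]
    exact Finset.subset_insert _ _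
  | cons i t ih =>
    intro X hnd hjL hXL hjX
    have hit : i ∉ t := (List.nodup_cons.1 hnd).1
    have hndt : t.Nodup := (List.nodup_cons.1 hnd).2
    have hjt : j ∉ t := fun h => hjL (List.mem_cons_of_mem _ h)
    have hji : j ≠ i := fun h => hjL (h ▸ List.mem_cons_self)
    have hiX : i ∉ X := hXL i (List.mem_cons_self)
    by_cases hY : (∀ c, (C i).1 c + ∑ j' ∈ insert j X, (C j').1 c ≤ s c) ∧ ohat o (C i).1 ≤ (C i).2
    · -- accepted in both runs
      have hX : _ := gstep_imp o s C X j i hjX hY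
      have e1 : gstep o s C X i = insert i X := if_pos hX
      have e2 : gstep o s C (insert j X) i = insert j (insert i X) := by
        rw [gstep, if_pos hY, Finset.insert_comm]
      rw [List.foldl_cons, List.foldl_cons, e1, e2]
      rcases ih (insert i X) hndt hjt
          (fun x hx => by
            simp only [Finset.mem_insert, not_or]
            exact ⟨fun h => hit (h ▸ hx), hXL x (List.mem_cons_of_mem _ hx)⟩)
          (by simp [hji, hjX]) with h | ⟨G, i₁, l₁, l₂, hsp, h1, h2, h3, h4, h5, h6⟩
      · exact Or.inl h
      · refine Or.inr ⟨G, i₁, i :: l₁, l₂, by rw [hsp]; rfl, h1, h2, h3, ?_, h5, h6⟩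
        intro x hx
        rcases h4 x hx with h | h
        · rcases Finset.mem_insert.1 h with rfl | h
          · exact Or.inr (List.mem_cons_self)
          · exact Or.inl h
        · exact Or.inr (List.mem_cons_of_mem _ h)
    · by_cases hX : (∀ c, (C i).1 c + ∑ j' ∈ X, (C j').1 c ≤ s c) ∧ ohat o (C i).1 ≤ (C i).2
      · -- divergence at i
        right
        have e1 : gstep o s C X i = insert i X := if_pos hX
        have e2 : gstep o s C (insert j X) i = insert j X := if_neg hY
        have hF : (i :: t).foldl (gstep o s C) X = t.foldl (gstep o s C) (insert i X) := by
          rw [List.foldl_cons, e1]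
        have hFj : (i :: t).foldl (gstep o s C) (insert j X) = t.foldl (gstep o s C) (insert j X) := by
          rw [List.foldl_cons, e2]
        have hiF : i ∈ (i :: t).foldl (gstep o s C) X := by
          rw [hF]; exact subset_foldl o s C t _ (Finset.mem_insert_self _ _)
        have hiFj : i ∉ (i :: t).foldl (gstep o s C) (insert j X) := by
          rw [hFj]
          exact not_mem_foldl o s C t _ i (by simp only [Finset.mem_insert, not_or]; exact ⟨fun h => hji h.symm, hiX⟩) hit
        refine ⟨X, i, [], t, rfl, hiF, hiFj, ?_, fun x hx => Or.inl hx, ?_, ?_⟩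
        · rw [hF]
          exact (Finset.subset_insert _ _).trans (subset_foldl o s C t _)
        · -- ARC fails for Y-run
          have : ¬ (∀ c, (C i).1 c + ∑ j' ∈ insert j X, (C j').1 c ≤ s c) := fun h => hY ⟨h, hX.2⟩
          push_neg at this
          obtain ⟨c, hc⟩ := this
          exact ⟨c, by rwa [Finset.sum_insert hjX] at hc⟩
        · intro x hx
          rw [hF, hFj] at hx
          have hx1 := Finset.mem_sdiff.1 hx
          have hxin := foldl_subset o s C t (insert i X) hx1.1
          have hxnotX : x ∉ insert j X := fun h =>
            hx1.2 (subset_foldl o s C t (insert j X) h)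
          rcases Finset.mem_union.1 hxin with h | h
          · rcases Finset.mem_insert.1 h with rfl | h
            · exact Or.inl rfl
            · exact absurd (Finset.mem_insert_of_mem h) hxnotX
          · exact Or.inr (List.mem_toFinset.1 h)
      · -- rejected in both
        have e1 : gstep o s C X i = X := if_neg hX
        have e2 : gstep o s C (insert j X) i = insert j X := if_neg hY
        rw [List.foldl_cons, List.foldl_cons, e1, e2]
        rcases ih X hndt hjt (fun x hx => hXL x (List.mem_cons_of_mem _ hx)) hjX with
          h | ⟨G, i₁, l₁, l₂, hsp, h1, h2, h3, h4, h5, h6⟩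
        · exact Or.inl h
        · exact Or.inr ⟨G, i₁, i :: l₁, l₂, by rw [hsp]; rfl, h1, h2, h3,
            fun x hx => (h4 x hx).imp id (List.mem_cons_of_mem _), h5, h6⟩
end FoldPart

section SortPart
variable (f : Fin k → ℝ) (q : ℝ) (C : Fin n → Bid k)

lemma pair_sublist_of_sorted_lt {α : Type*} [Preorder α] :
    ∀ (l : List α), l.Pairwise (· < ·) → ∀ a b : α, a < b → a ∈ l → b ∈ l → List.Sublist [a, b] l := by
  intro l
  induction l with
  | nil => intro _ a b _ ha; simp at ha
  | cons h t ih =>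
    intro hs a b hab ha hb
    obtain ⟨hhead, htail⟩ := List.pairwise_cons.1 hs
    rcases List.mem_cons.1 ha with rfl | hat
    · have hbt : b ∈ t := by
        rcases List.mem_cons.1 hb with rfl | hbt
        · exact absurd hab (lt_irrefl _)
        · exact hbt
      exact List.cons_sublist_cons.2 (List.singleton_sublist.2 hbt)
    · have hbt : b ∈ t := by
        rcases List.mem_cons.1 hb with rfl | hbt
        · exact absurd (lt_trans (hhead a hat) hab) (lt_irrefl _)
        · exact hbt
      exact (ih htail a b hab hat hbt).cons _

lemma sublist_pair_antisymm {α : Type*} :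
    ∀ (l : List α), l.Nodup → ∀ a b : α, List.Sublist [a, b] l → List.Sublist [b, a] l → a = b := by
  intro l
  induction l with
  | nil => intro _ a b h; simp at h
  | cons h t ih =>
    intro hnd a b h1 h2
    have hht := List.nodup_cons.1 hnd
    cases h1 with
    | cons _ h1' =>
      cases h2 with
      | cons _ h2' => exact ih hht.2 a b h1' h2'
      | cons_cons _ h2' =>
        -- h = b, [a] <+ t ; but b ∈ t from h1'
        exact absurd (h1'.subset (by simp)) hht.1
    | cons_cons _ h1' =>
      cases h2 with
      | cons _ h2' =>
        exact absurd (h2'.subset (by simp)) hht.1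
      | cons_cons _ h2' => rfl

lemma sortedBids_perm (A : Finset (Fin n)) : List.Perm (sortedBids f q C A) (A.sort (· ≤ ·)) :=
  List.mergeSort_perm _ _

lemma sortedBids_nodup (A : Finset (Fin n)) : (sortedBids f q C A).Nodup :=
  ((sortedBids_perm f q C A).nodup_iff).2 (A.sort_nodup _)

lemma mem_sortedBids (A : Finset (Fin n)) (x : Fin n) :
    x ∈ sortedBids f q C A ↔ x ∈ A := by
  rw [(sortedBids_perm f q C A).mem_iff, Finset.mem_sort]

lemma sortedBids_pairwise (A : Finset (Fin n)) :
    (sortedBids f q C A).Pairwise (fun a b => density f q (C b) ≤ density f q (C a)) := by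
  have := List.pairwise_mergeSort
    (le := fun i j => decide (density f q (C j) ≤ density f q (C i)))
    (fun a b c h1 h2 => by
      simp only [decide_eq_true_eq] at *; exact le_trans h2 h1)
    (fun a b => by
      simp only [Bool.or_eq_true, decide_eq_true_eq]; exact le_total _ _)
    (A.sort (· ≤ ·))
  exact this.imp (by simp only [decide_eq_true_eq]; exact fun h => h)

/-- the stable (lexicographic) order underlying `sortedBids`. -/
def lexR (a b : Fin n) : Prop :=
  density f q (C b) < density f q (C a) ∨
    (density f q (C a) = density f q (C b) ∧ a ≤ b)

lemma lexR_antisymm : ∀ a b, lexR f q C a b → lexR f q C b a → a = b := by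
  intro a b h1 h2
  rcases h1 with h1 | ⟨e1, le1⟩ <;> rcases h2 with h2 | ⟨e2, le2⟩
  · exact absurd (lt_trans h1 h2) (lt_irrefl _)
  · exact absurd h1 (by rw [e2]; exact lt_irrefl _)
  · exact absurd h2 (by rw [e1]; exact lt_irrefl _)
  · exact le_antisymm le1 le2

lemma lexR_trans : ∀ a b c, lexR f q C a b → lexR f q C b c → lexR f q C a c := by
  intro a b c h1 h2
  rcases h1 with h1 | ⟨e1, le1⟩ <;> rcases h2 with h2 | ⟨e2, le2⟩
  · exact Or.inl (lt_trans h2 h1)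
  · exact Or.inl (e2 ▸ h1)
  · exact Or.inl (e1 ▸ h2)
  · exact Or.inr ⟨e1.trans e2, le1.trans le2⟩

lemma sortedBids_pairwise_lex (A : Finset (Fin n)) :
    (sortedBids f q C A).Pairwise (lexR f q C) := by
  rw [List.pairwise_iff_forall_sublist]
  intro a b hab
  have h1 : density f q (C b) ≤ density f q (C a) :=
    (List.pairwise_iff_forall_sublist.1 (sortedBids_pairwise f q C A)) hab
  rcases lt_or_eq_of_le h1 with h | h
  · exact Or.inl h
  · refine Or.inr ⟨h.symm, ?_⟩
    by_contra hba
    push_neg at hba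
    have hmem : ∀ x ∈ [a, b], x ∈ A.sort (· ≤ ·) := by
      intro x hx
      have := hab.subset hx
      rwa [(sortedBids_perm f q C A).mem_iff] at this
    have hpair : List.Sublist [b, a] (A.sort (· ≤ ·)) := by
      refine pair_sublist_of_sorted_lt _ (A.sortedLT_sort.pairwise) b a hba
        (hmem b (by simp)) (hmem a (by simp))
    have hba2 : List.Sublist [b, a] (sortedBids f q C A) :=
      List.pair_sublist_mergeSort
        (fun a b c h1 h2 => by
          simp only [decide_eq_true_eq] at *; exact le_trans h2 h1)
        (fun a b => by
          simp only [Bool.or_eq_true, decide_eq_true_eq]; exact le_total _ _)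
        (by simp [h]) hpair
    have := sublist_pair_antisymm _ (sortedBids_nodup f q C A) a b hab hba2
    exact (ne_of_gt hba) this

lemma sortedBids_congr (C' : Fin n → Bid k) (A : Finset (Fin n)) (h : ∀ x ∈ A, C x = C' x) :
    sortedBids f q C A = sortedBids f q C' A := by
  haveI : IsAntisymm (Fin n) (lexR f q C) := ⟨lexR_antisymm f q C⟩
  refine List.Perm.eq_of_pairwise'
    (sortedBids_pairwise_lex f q C A) ?_
    ((sortedBids_perm f q C A).trans (sortedBids_perm f q C' A).symm)
  refine (sortedBids_pairwise_lex f q C' A).imp_of_mem ?_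
  intro a b ha hb hlex
  rw [mem_sortedBids] at ha hb
  unfold lexR at *
  rw [h a ha, h b hb]
  exact hlex

lemma sortedBids_erase (A : Finset (Fin n)) (j : Fin n) :
    (sortedBids f q C A).erase j = sortedBids f q C (A.erase j) := by
  haveI : IsAntisymm (Fin n) (lexR f q C) := ⟨lexR_antisymm f q C⟩
  have hperm1 : List.Perm ((A.sort (· ≤ ·)).erase j) ((A.erase j).sort (· ≤ ·)) := by
    refine List.perm_of_nodup_nodup_toFinset_eq ((A.sort_nodup _).erase _)
      ((A.erase j).sort_nodup _) ?_
    ext x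
    rw [List.mem_toFinset, List.mem_toFinset, (A.sort_nodup (· ≤ ·)).mem_erase_iff,
      Finset.mem_sort, Finset.mem_sort, Finset.mem_erase]
  refine List.Perm.eq_of_pairwise'
    (List.Pairwise.sublist List.erase_sublist (sortedBids_pairwise_lex f q C A))
    (sortedBids_pairwise_lex f q C (A.erase j))
    ((((sortedBids_perm f q C A).erase j).trans hperm1).trans
      (sortedBids_perm f q C (A.erase j)).symm)
end SortPart

section Main
variable (o f : Fin k → ℝ) (s : Fin k → ℕ) (q : ℝ)

lemma grants_eq (C : Fin n → Bid k) (A : Finset (Fin n)) :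
    grants o f s q C A = (sortedBids f q C A).foldl (gstep o s C) ∅ := rfl

lemma winners_eq (C : Fin n → Bid k) :
    winners o f s q C = grants o f s q C Finset.univ := rfl

lemma grants_subset (C : Fin n → Bid k) (A : Finset (Fin n)) :
    grants o f s q C A ⊆ A := by
  rw [grants_eq]
  intro x hx
  rcases Finset.mem_union.1 (foldl_subset o s C _ _ hx) with h | h
  · simp at h
  · exact (mem_sortedBids f q C A x).1 (List.mem_toFinset.1 h)

/-- The run of GRP-A with bidder `j`'s bid removed does not depend on `j`'s bid. -/
lemma grants_erase_congr (B : Fin n → Bid k) (j : Fin n) (b : Bid k) :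
    grants o f s q (Function.update B j b) (univ.erase j) = grants o f s q B (univ.erase j) := by
  rw [grants_eq, grants_eq,
    sortedBids_congr f q (Function.update B j b) B (univ.erase j)
      (fun x hx => Function.update_of_ne (Finset.mem_erase.1 hx).1 _ _)]
  refine foldl_congr o s (Function.update B j b) B j
    (fun x hx => Function.update_of_ne hx _ _) _ _ (by simp) ?_
  intro hj
  exact absurd ((mem_sortedBids f q B _ j).1 hj) (by simp)

/-- Decomposition of a GRP-A run at bidder `j`'s position. -/
lemma run (C : Fin n → Bid k) (j : Fin n) :
    ∃ (l₂ : List (Fin n)) (X₀ : Finset (Fin n)),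
      winners o f s q C = l₂.foldl (gstep o s C) (gstep o s C X₀ j) ∧
      grants o f s q C (univ.erase j) = l₂.foldl (gstep o s C) X₀ ∧
      j ∉ X₀ ∧ j ∉ l₂ ∧ l₂.Nodup ∧ (∀ x ∈ l₂, x ∉ X₀) ∧
      (∀ x ∈ X₀, density f q (C j) ≤ density f q (C x)) ∧
      (∀ x ∈ l₂, density f q (C x) ≤ density f q (C j)) ∧
      l₂.Pairwise (fun a b => density f q (C b) ≤ density f q (C a)) ∧
      X₀ ⊆ grants o f s q C (univ.erase j) := by
  have hj : j ∈ sortedBids f q C univ := (mem_sortedBids f q C univ j).2 (Finset.mem_univ j)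
  obtain ⟨l₁, l₂, hsp⟩ := List.append_of_mem hj
  have hnd : (l₁ ++ j :: l₂).Nodup := hsp ▸ sortedBids_nodup f q C univ
  have hpw : (l₁ ++ j :: l₂).Pairwise (fun a b => density f q (C b) ≤ density f q (C a)) :=
    hsp ▸ sortedBids_pairwise f q C univ
  obtain ⟨hnd1, hnd2, hdisj⟩ := List.nodup_append.1 hnd
  have hjl₁ : j ∉ l₁ := fun h => hdisj j h j (List.mem_cons_self) rfl
  have hjl₂ : j ∉ l₂ := (List.nodup_cons.1 hnd2).1
  have hndl₂ : l₂.Nodup := (List.nodup_cons.1 hnd2).2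
  obtain ⟨hpw1, hpw2, hrel⟩ := List.pairwise_append.1 hpw
  refine ⟨l₂, l₁.foldl (gstep o s C) ∅, ?_, ?_, ?_, hjl₂, hndl₂, ?_, ?_, ?_, ?_, ?_⟩
  · rw [winners_eq, grants_eq, hsp, List.foldl_append, List.foldl_cons]
  · rw [grants_eq, ← sortedBids_erase f q C univ j, hsp,
      List.erase_append_right _ hjl₁, List.erase_cons_head, List.foldl_append]
  · intro h
    rcases Finset.mem_union.1 (foldl_subset o s C _ _ h) with h | h
    · simp at h
    · exact hjl₁ (List.mem_toFinset.1 h)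
  · intro x hx h
    rcases Finset.mem_union.1 (foldl_subset o s C _ _ h) with h | h
    · simp at h
    · exact hdisj x (List.mem_toFinset.1 h) x (List.mem_cons_of_mem _ hx) rfl
  · intro x hx
    have : x ∈ l₁ := by
      rcases Finset.mem_union.1 (foldl_subset o s C _ _ hx) with h | h
      · simp at h
      · exact List.mem_toFinset.1 h
    exact hrel x this j (List.mem_cons_self)
  · exact fun x hx => (List.pairwise_cons.1 hpw2).1 x hx
  · exact (List.pairwise_cons.1 hpw2).2
  · rw [grants_eq, ← sortedBids_erase f q C univ j, hsp, List.erase_append_right _ hjl₁,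
      List.erase_cons_head, List.foldl_append]
    exact subset_foldl o s C _ _

lemma dhat_nonneg (d : Bundle k) (hf : ∀ i, 0 < f i) : 0 ≤ dhat f d :=
  Finset.sum_nonneg fun i _ => mul_nonneg (Nat.cast_nonneg _) (hf i).le

lemma dhat_pos (hf : ∀ i, 0 < f i) {d : Bundle k} (hd : nonzeroBundle d) : 0 < dhat f d := by
  obtain ⟨i, hi⟩ := hd
  refine Finset.sum_pos' (fun i _ => mul_nonneg (Nat.cast_nonneg _) (hf i).le)
    ⟨i, Finset.mem_univ i, mul_pos (by exact_mod_cast hi) (hf i)⟩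

lemma dpow_pos (hf : ∀ i, 0 < f i) {d : Bundle k} (hd : nonzeroBundle d) :
    0 < (dhat f d) ^ q :=
  Real.rpow_pos_of_pos (dhat_pos f hf hd) q

lemma dhat_mono (hf : ∀ i, 0 < f i) {d d' : Bundle k} (h : d ≤ d') :
    dhat f d ≤ dhat f d' :=
  Finset.sum_le_sum fun i _ =>
    mul_le_mul_of_nonneg_right (by exact_mod_cast h i) (hf i).le

lemma ohat_nonneg (ho : ∀ i, 0 ≤ o i) (d : Bundle k) : 0 ≤ ohat o d :=
  Finset.sum_nonneg fun i _ => mul_nonneg (Nat.cast_nonneg _) (ho i)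

lemma ohat_mono (ho : ∀ i, 0 ≤ o i) {d d' : Bundle k} (h : d ≤ d') :
    ohat o d ≤ ohat o d' :=
  Finset.sum_le_sum fun i _ =>
    mul_le_mul_of_nonneg_right (by exact_mod_cast h i) (ho i)

lemma density_nonneg (hf : ∀ i, 0 < f i) {b : Bid k} (hb : 0 ≤ b.2) :
    0 ≤ density f q b :=
  div_nonneg hb (Real.rpow_nonneg (dhat_nonneg f b.1 hf) q)


lemma winner_cond (C : Fin n → Bid k) (j : Fin n) (l₂ : List (Fin n)) (X₀ : Finset (Fin n))
    (h1 : winners o f s q C = l₂.foldl (gstep o s C) (gstep o s C X₀ j))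
    (hjX : j ∉ X₀) (hjl : j ∉ l₂) (hw : j ∈ winners o f s q C) :
    (∀ c, (C j).1 c + ∑ x ∈ X₀, (C x).1 c ≤ s c) ∧ ohat o (C j).1 ≤ (C j).2 := by
  by_contra hc
  rw [h1, gstep, if_neg hc] at hw
  exact not_mem_foldl o s C l₂ X₀ j hjX hjl hw

lemma winners_feasible (C : Fin n → Bid k) :
    ∀ c, ∑ x ∈ winners o f s q C, (C x).1 c ≤ s c := by
  rw [winners_eq, grants_eq]
  exact foldl_feasible o s C _ ∅ (by simp)

lemma ohat_le_payment (hf : ∀ i, 0 < f i) (C : Fin n → Bid k) (j : Fin n)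
    (hw : j ∈ winners o f s q C) (hd : nonzeroBundle (C j).1) :
    ohat o (C j).1 ≤ payment o f s q C j := by
  have hD : 0 < (dhat f (C j).1) ^ q := dpow_pos f q hf hd
  rw [payment, if_pos hw]
  calc ohat o (C j).1 = eres o f q (C j) * (dhat f (C j).1) ^ q := by
        rw [eres, div_mul_cancel₀ _ hD.ne']
    _ ≤ _ := mul_le_mul_of_nonneg_right (le_max_right _ _) hD.le

lemma payment_le_val (hf : ∀ i, 0 < f i)
    (B : Fin n → Bid k) (j : Fin n) (dstar : Bundle k) (vstar : ℝ)
    (hdstar : nonzeroBundle dstar) (hvstar : 0 ≤ vstar)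
    (hw : j ∈ winners o f s q (Function.update B j (dstar, vstar))) :
    payment o f s q (Function.update B j (dstar, vstar)) j ≤ vstar := by
  set C := Function.update B j (dstar, vstar) with hC
  have hCj : C j = (dstar, vstar) := Function.update_self _ _ _
  obtain ⟨l₂, X₀, h1, h2, hjX, hjl, hnd, hl₂X, hX₀d, hl₂d, hpw, hX₀sub⟩ := run o f s q C j
  have hcond := winner_cond o f s q C j l₂ X₀ h1 hjX hjl hw
  have hD : 0 < (dhat f dstar) ^ q := dpow_pos f q hf hdstar
  have hb1 : (C j).1 = dstar := by rw [hCj]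
  have hb2 : (C j).2 = vstar := by rw [hCj]
  have hdensj : density f q (C j) = vstar / (dhat f dstar) ^ q := by
    rw [density, hb1, hb2]
  have hmax : max (ecomp o f s q C j) (eres o f q (C j)) ≤ vstar / (dhat f dstar) ^ q := by
    refine max_le ?_ ?_
    · rw [ecomp]
      split
      · rename_i hne
        refine Finset.sup'_le _ _ ?_
        intro x hx
        rw [competitorSet, h2, h1] at hx
        obtain ⟨hxm, hxw⟩ := Finset.mem_sdiff.1 hx
        have hgj : gstep o s C X₀ j = insert j X₀ := if_pos hcond
        have hxl₂ : x ∈ l₂ := by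
          rcases Finset.mem_union.1 (foldl_subset o s C _ _ hxm) with h | h
          · exact absurd (subset_foldl o s C l₂ _ (hgj ▸ Finset.mem_insert_of_mem h)) hxw
          · exact List.mem_toFinset.1 h
        exact hdensj ▸ hl₂d x hxl₂
      · exact div_nonneg hvstar hD.le
    · rw [eres, hb1]
      have hrpc := hcond.2
      rw [hb1, hb2] at hrpc
      exact (div_le_div_iff_of_pos_right hD).2 hrpc
  rw [payment, if_pos hw, hb1]
  calc max (ecomp o f s q C j) (eres o f q (C j)) * (dhat f dstar) ^ q
      ≤ (vstar / (dhat f dstar) ^ q) * (dhat f dstar) ^ q :=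
        mul_le_mul_of_nonneg_right hmax hD.le
    _ = vstar := div_mul_cancel₀ _ hD.ne'

lemma lose (hf : ∀ i, 0 < f i) (ho : ∀ i, 0 ≤ o i) (hq0 : 0 ≤ q)
    (B : Fin n → Bid k) (j : Fin n)
    (dstar d' : Bundle k) (vstar v' : ℝ)
    (hdstar : nonzeroBundle dstar) (hd' : nonzeroBundle d') (hvstar : 0 ≤ vstar)
    (hdd : dstar ≤ d')
    (hwn : j ∉ winners o f s q (Function.update B j (dstar, vstar)))
    (hw' : j ∈ winners o f s q (Function.update B j (d', v'))) :
    vstar ≤ payment o f s q (Function.update B j (d', v')) j := by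
  set Cs := Function.update B j (dstar, vstar) with hCsdef
  set C' := Function.update B j (d', v') with hC'def
  have hCsj : Cs j = (dstar, vstar) := Function.update_self _ _ _
  have hC'j : C' j = (d', v') := Function.update_self _ _ _
  have hbs : (Cs j).1 = dstar := by rw [hCsj]
  have hb' : (C' j).1 = d' := by rw [hC'j]
  have hD : 0 < (dhat f dstar) ^ q := dpow_pos f q hf hdstar
  have hD' : 0 < (dhat f d') ^ q := dpow_pos f q hf hd'
  have hDD : (dhat f dstar) ^ q ≤ (dhat f d') ^ q :=
    Real.rpow_le_rpow (dhat_nonneg f dstar hf) (dhat_mono f hf hdd) hq0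
  have hopay : ohat o d' ≤ payment o f s q C' j := by
    have := ohat_le_payment o f s q hf C' j hw' (hb' ▸ hd')
    rwa [hb'] at this
  obtain ⟨l₂, X₀, h1, h2, hjX, hjl, hnd, hl₂X, hX₀d, hl₂d, hpw, hX₀sub⟩ := run o f s q Cs j
  by_cases hrpc : ohat o dstar ≤ vstar
  · -- the ARC must have failed for the truthful bid
    have hcondn : ¬ ((∀ c, (Cs j).1 c + ∑ x ∈ X₀, (Cs x).1 c ≤ s c) ∧
        ohat o (Cs j).1 ≤ (Cs j).2) := by
      intro hcond
      refine hwn ?_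
      rw [h1, gstep, if_pos hcond]
      exact subset_foldl o s Cs l₂ _ (Finset.mem_insert_self _ _)
    have harc : ∃ c, s c < dstar c + ∑ x ∈ X₀, (Cs x).1 c := by
      have : ¬ ∀ c, (Cs j).1 c + ∑ x ∈ X₀, (Cs x).1 c ≤ s c := by
        intro h
        exact hcondn ⟨h, by rw [hCsj]; exact hrpc⟩
      push_neg at this
      obtain ⟨c, hc⟩ := this
      exact ⟨c, by rwa [hbs] at hc⟩
    obtain ⟨c, hc⟩ := harc
    have hfeas := winners_feasible o f s q C' c
    have hex : ∃ x ∈ X₀, x ∉ winners o f s q C' := by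
      by_contra h
      push_neg at h
      have hsubW : insert j X₀ ⊆ winners o f s q C' :=
        Finset.insert_subset_iff.2 ⟨hw', h⟩
      have hsum : ∑ x ∈ insert j X₀, (C' x).1 c ≤ s c :=
        le_trans (Finset.sum_le_sum_of_subset hsubW) hfeas
      rw [Finset.sum_insert hjX] at hsum
      have hcongr : ∑ x ∈ X₀, (C' x).1 c = ∑ x ∈ X₀, (Cs x).1 c := by
        refine Finset.sum_congr rfl fun x hx => ?_
        have hxj : x ≠ j := fun hxj => hjX (hxj ▸ hx)
        rw [hC'def, hCsdef, Function.update_of_ne hxj, Function.update_of_ne hxj]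
      rw [hcongr, hb'] at hsum
      have : dstar c + ∑ x ∈ X₀, (Cs x).1 c ≤ s c :=
        le_trans (Nat.add_le_add_right (hdd c) _) hsum
      exact absurd this (not_le.2 hc)
    obtain ⟨x, hxX₀, hxW⟩ := hex
    have hxj : x ≠ j := fun h => hjX (h ▸ hxX₀)
    have hxcomp : x ∈ competitorSet o f s q C' j := by
      rw [competitorSet]
      refine Finset.mem_sdiff.2 ⟨?_, hxW⟩
      have hxg : x ∈ grants o f s q Cs (univ.erase j) := hX₀sub hxX₀
      rw [hCsdef, grants_erase_congr] at hxg
      rwa [hC'def, grants_erase_congr]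
    have hdx : vstar / (dhat f dstar) ^ q ≤ density f q (C' x) := by
      have hxd := hX₀d x hxX₀
      have e1 : density f q (Cs j) = vstar / (dhat f dstar) ^ q := by
        rw [density, hbs, hCsj]
      have e2 : density f q (Cs x) = density f q (C' x) := by
        rw [hCsdef, hC'def, Function.update_of_ne hxj, Function.update_of_ne hxj]
      rw [e1, e2] at hxd
      exact hxd
    have hdx0 : 0 ≤ density f q (C' x) := le_trans (div_nonneg hvstar hD.le) hdx
    have hne : (competitorSet o f s q C' j).Nonempty := ⟨x, hxcomp⟩
    have hecomp : density f q (C' x) ≤ ecomp o f s q C' j := by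
      rw [ecomp, dif_pos hne]
      exact Finset.le_sup' (fun i => density f q (C' i)) hxcomp
    calc vstar = (vstar / (dhat f dstar) ^ q) * (dhat f dstar) ^ q :=
          (div_mul_cancel₀ _ hD.ne').symm
      _ ≤ density f q (C' x) * (dhat f d') ^ q := mul_le_mul hdx hDD hD.le hdx0
      _ ≤ ecomp o f s q C' j * (dhat f d') ^ q :=
          mul_le_mul_of_nonneg_right hecomp hD'.le
      _ ≤ max (ecomp o f s q C' j) (eres o f q (C' j)) * (dhat f d') ^ q :=
          mul_le_mul_of_nonneg_right (le_max_left _ _) hD'.le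
      _ = payment o f s q C' j := by rw [payment, if_pos hw', hb']
  · exact le_trans (le_trans (not_le.1 hrpc).le (ohat_mono o ho hdd)) hopay

lemma win (hf : ∀ i, 0 < f i) (ho : ∀ i, 0 ≤ o i) (hq0 : 0 ≤ q)
    (B : Fin n → Bid k) (j : Fin n) (hB : ∀ i, i ≠ j → validBid (B i))
    (dstar d' : Bundle k) (vstar v' : ℝ)
    (hdstar : nonzeroBundle dstar) (hd' : nonzeroBundle d')
    (hdd : dstar ≤ d')
    (hws : j ∈ winners o f s q (Function.update B j (dstar, vstar)))
    (hw' : j ∈ winners o f s q (Function.update B j (d', v'))) :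
    payment o f s q (Function.update B j (dstar, vstar)) j ≤
      payment o f s q (Function.update B j (d', v')) j := by
  set Cs := Function.update B j (dstar, vstar) with hCsdef
  set C' := Function.update B j (d', v') with hC'def
  have hCsj : Cs j = (dstar, vstar) := Function.update_self _ _ _
  have hC'j : C' j = (d', v') := Function.update_self _ _ _
  have hbs : (Cs j).1 = dstar := by rw [hCsj]
  have hb' : (C' j).1 = d' := by rw [hC'j]
  have hD : 0 < (dhat f dstar) ^ q := dpow_pos f q hf hdstar
  have hD' : 0 < (dhat f d') ^ q := dpow_pos f q hf hd'
  have hDD : (dhat f dstar) ^ q ≤ (dhat f d') ^ q :=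
    Real.rpow_le_rpow (dhat_nonneg f dstar hf) (dhat_mono f hf hdd) hq0
  have hopay : ohat o d' ≤ payment o f s q C' j := by
    have := ohat_le_payment o f s q hf C' j hw' (hb' ▸ hd')
    rwa [hb'] at this
  have hpay0 : 0 ≤ payment o f s q C' j := le_trans (ohat_nonneg o ho d') hopay
  obtain ⟨l₂, X₀, h1, h2, hjX, hjl, hnd, hl₂X, hX₀d, hl₂d, hpw, hX₀sub⟩ := run o f s q Cs j
  have hcond := winner_cond o f s q Cs j l₂ X₀ h1 hjX hjl hws
  have hgj : gstep o s Cs X₀ j = insert j X₀ := if_pos hcond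
  have hWm : grants o f s q Cs (univ.erase j) = grants o f s q C' (univ.erase j) := by
    rw [hCsdef, grants_erase_congr, hC'def, grants_erase_congr]
  rw [payment, if_pos hws, hbs, max_mul_of_nonneg _ _ hD.le]
  refine max_le ?_ ?_
  · -- the `ecomp` part
    rw [ecomp]
    split
    · rename_i hne
      rcases par o s Cs j l₂ X₀ hnd hjl hl₂X hjX with hempty |
        ⟨G, i₁, l₁', l₂', hsp, hi₁F, hi₁Fj, hGF, hGsub, ⟨c, hc⟩, hdiff⟩
      · exfalso
        obtain ⟨x, hx⟩ := hne
        rw [competitorSet, h2, h1, hgj] at hx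
        rw [hempty] at hx
        simp at hx
      · have hi₁l₂ : i₁ ∈ l₂ := by
          rw [hsp]; exact List.mem_append_right _ (List.mem_cons_self)
        have hi₁j : i₁ ≠ j := fun h => hjl (h ▸ hi₁l₂)
        have hpw2 : (l₁' ++ i₁ :: l₂').Pairwise
            (fun a b => density f q (Cs b) ≤ density f q (Cs a)) := hsp ▸ hpw
        obtain ⟨hpwa, hpwb, hrel₂⟩ := List.pairwise_append.1 hpw2
        have hnd2 : (l₁' ++ i₁ :: l₂').Nodup := hsp ▸ hnd
        obtain ⟨hnda, hndb, hdisj₂⟩ := List.nodup_append.1 hnd2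
        have hsup : ∀ x ∈ competitorSet o f s q Cs j,
            density f q (Cs x) ≤ density f q (Cs i₁) := by
          intro x hx
          rw [competitorSet, h2, h1, hgj] at hx
          rcases hdiff x hx with rfl | hxl₂'
          · exact le_refl _
          · exact (List.pairwise_cons.1 hpwb).1 x hxl₂'
        have hdi₁B : density f q (Cs i₁) = density f q (B i₁) := by
          rw [hCsdef, Function.update_of_ne hi₁j]
        have hdi₁0 : 0 ≤ density f q (Cs i₁) := by
          rw [hdi₁B]; exact density_nonneg f q hf (hB i₁ hi₁j).2
        suffices hY : ∃ y, y ∈ competitorSet o f s q C' j ∧ y ≠ j ∧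
            density f q (Cs i₁) ≤ density f q (Cs y) by
          obtain ⟨y, hycomp, hyj, hydens⟩ := hY
          have hdyC' : density f q (Cs y) = density f q (C' y) := by
            rw [hCsdef, hC'def, Function.update_of_ne hyj, Function.update_of_ne hyj]
          have hydens' : density f q (Cs i₁) ≤ density f q (C' y) := hdyC' ▸ hydens
          have hyne : (competitorSet o f s q C' j).Nonempty := ⟨y, hycomp⟩
          calc (competitorSet o f s q Cs j).sup' hne (fun i => density f q (Cs i)) *
                (dhat f dstar) ^ q
              ≤ density f q (Cs i₁) * (dhat f dstar) ^ q :=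
                mul_le_mul_of_nonneg_right (Finset.sup'_le _ _ hsup) hD.le
            _ ≤ density f q (C' y) * (dhat f d') ^ q :=
                mul_le_mul hydens' hDD hD.le (le_trans hdi₁0 hydens')
            _ ≤ ecomp o f s q C' j * (dhat f d') ^ q := by
                refine mul_le_mul_of_nonneg_right ?_ hD'.le
                rw [ecomp, dif_pos hyne]
                exact Finset.le_sup' (fun i => density f q (C' i)) hycomp
            _ ≤ max (ecomp o f s q C' j) (eres o f q (C' j)) * (dhat f d') ^ q :=
                mul_le_mul_of_nonneg_right (le_max_left _ _) hD'.le
            _ = payment o f s q C' j := by rw [payment, if_pos hw', hb']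
        by_cases hi₁W' : i₁ ∈ winners o f s q C'
        · -- `i₁` wins after the lie: the resource bound produces another competitor
          have hjG : j ∉ G := by
            intro h
            rcases hGsub j h with h' | h'
            · exact hjX h'
            · exact hjl (by rw [hsp]; exact List.mem_append_left _ h')
          have hi₁G : i₁ ∉ G := by
            intro h
            rcases hGsub i₁ h with h' | h'
            · exact hl₂X i₁ hi₁l₂ h'
            · exact hdisj₂ i₁ h' i₁ (List.mem_cons_self) rfl
          have hji₁ : j ∉ insert i₁ G := by
            simp only [Finset.mem_insert, not_or]
            exact ⟨fun h => hi₁j h.symm, hjG⟩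
          have hfeas := winners_feasible o f s q C' c
          have hex : ∃ y ∈ G, y ∉ winners o f s q C' := by
            by_contra h
            push_neg at h
            have hsubW : insert j (insert i₁ G) ⊆ winners o f s q C' :=
              Finset.insert_subset_iff.2 ⟨hw', Finset.insert_subset_iff.2 ⟨hi₁W', h⟩⟩
            have hsum : ∑ x ∈ insert j (insert i₁ G), (C' x).1 c ≤ s c :=
              le_trans (Finset.sum_le_sum_of_subset hsubW) hfeas
            rw [Finset.sum_insert hji₁, Finset.sum_insert hi₁G] at hsum
            have hcongr : ∑ x ∈ G, (C' x).1 c = ∑ x ∈ G, (Cs x).1 c := by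
              refine Finset.sum_congr rfl fun x hx => ?_
              have hxj : x ≠ j := fun hxj => hjG (hxj ▸ hx)
              rw [hC'def, hCsdef, Function.update_of_ne hxj, Function.update_of_ne hxj]
            have hci₁ : (C' i₁).1 = (Cs i₁).1 := by
              rw [hC'def, hCsdef, Function.update_of_ne hi₁j, Function.update_of_ne hi₁j]
            rw [hcongr, hci₁, hb'] at hsum
            rw [hbs] at hc
            have hddc : dstar c ≤ d' c := hdd c
            omega
          obtain ⟨y, hyG, hyW⟩ := hex
          have hyj : y ≠ j := fun h => hjG (h ▸ hyG)
          refine ⟨y, ?_, hyj, ?_⟩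
          · rw [competitorSet]
            refine Finset.mem_sdiff.2 ⟨?_, hyW⟩
            have hyWm : y ∈ grants o f s q Cs (univ.erase j) := by rw [h2]; exact hGF hyG
            rwa [hWm] at hyWm
          · rcases hGsub y hyG with h' | h'
            · exact le_trans (hl₂d i₁ hi₁l₂) (hX₀d y h')
            · exact hrel₂ y h' i₁ (List.mem_cons_self)
        · refine ⟨i₁, ?_, hi₁j, le_refl _⟩
          rw [competitorSet]
          refine Finset.mem_sdiff.2 ⟨?_, hi₁W'⟩
          have hi₁Wm : i₁ ∈ grants o f s q Cs (univ.erase j) := by rw [h2]; exact hi₁F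
          rwa [hWm] at hi₁Wm
    · simpa using hpay0
  · -- the `eres` part
    rw [eres, hbs, div_mul_cancel₀ _ hD.ne']
    exact le_trans (ohat_mono o ho hdd) hopay

end Main

/-- Theorem 1, the Greedy-RP mechanism is truthful for single-minded
bidders: fixing the bids of all bidders other than `j`, if bidder `j` has true type
`(dstar, vstar)` with `dstar` a nonzero bundle and `vstar ≥ 0`, then the truthful
report `(dstar, vstar)` yields utility at least that of any report `(d', v')` with
`d'` a nonzero bundle and `v' ≥ 0`; truth-telling is a weakly dominant strategy. -/
theorem grp_truthful {k n : ℕ} (hk : 1 ≤ k)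
    (f o : Fin k → ℝ) (hf : ∀ i, 0 < f i) (ho : ∀ i, 0 ≤ o i)
    (s : Fin k → ℕ) (q : ℝ) (hq : 0 < q)
    (B : Fin n → Bid k) (j : Fin n)
    (hB : ∀ i, i ≠ j → validBid (B i))
    (dstar : Bundle k) (hdstar : nonzeroBundle dstar) (vstar : ℝ) (hvstar : 0 ≤ vstar)
    (d' : Bundle k) (hd' : nonzeroBundle d') (v' : ℝ) (hv' : 0 ≤ v') :
    utility o f s q (Function.update B j (d', v')) j dstar vstar ≤
      utility o f s q (Function.update B j (dstar, vstar)) j dstar vstar := by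
  set Cs := Function.update B j (dstar, vstar) with hCsdef
  set C' := Function.update B j (d', v') with hC'def
  have hCsj : Cs j = (dstar, vstar) := Function.update_self _ _ _
  have hC'j : C' j = (d', v') := Function.update_self _ _ _
  have hIR : 0 ≤ utility o f s q Cs j dstar vstar := by
    rw [utility]
    split
    · rename_i hw
      rw [hCsj, if_pos (le_refl dstar)]
      have := payment_le_val o f s q hf B j dstar vstar hdstar hvstar (hCsdef ▸ hw)
      rw [← hCsdef] at this
      linarith
    · exact le_refl 0
  by_cases hw' : j ∈ winners o f s q C'
  · have hL : utility o f s q C' j dstar vstar =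
        (if dstar ≤ d' then vstar else 0) - payment o f s q C' j := by
      rw [utility, if_pos hw', hC'j]
    by_cases hdd : dstar ≤ d'
    · rw [hL, if_pos hdd]
      by_cases hws : j ∈ winners o f s q Cs
      · have hR : utility o f s q Cs j dstar vstar = vstar - payment o f s q Cs j := by
          rw [utility, if_pos hws, hCsj, if_pos (le_refl dstar)]
        rw [hR]
        have := win o f s q hf ho hq.le B j hB dstar d' vstar v' hdstar hd' hdd
          (hCsdef ▸ hws) (hC'def ▸ hw')
        rw [← hCsdef, ← hC'def] at this
        linarith
      · have hR : utility o f s q Cs j dstar vstar = 0 := by rw [utility, if_neg hws]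
        have := lose o f s q hf ho hq.le B j dstar d' vstar v' hdstar hd' hvstar hdd
          (hCsdef ▸ hws) (hC'def ▸ hw')
        rw [← hC'def] at this
        rw [hR]
        linarith
    · rw [hL, if_neg hdd]
      have hpay0 : 0 ≤ payment o f s q C' j := by
        refine le_trans (ohat_nonneg o ho d') ?_
        have hb' : (C' j).1 = d' := by rw [hC'j]
        have := ohat_le_payment o f s q hf C' j hw' (hb' ▸ hd')
        rwa [hb'] at this
      exact le_trans (sub_nonpos.2 hpay0) hIR
  · have hL : utility o f s q C' j dstar vstar = 0 := by rw [utility, if_neg hw']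
    rw [hL]
    exact hIR

end
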